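/- Given μ ∈ ℝ, σ² > 0, and an integer κ with μ − σ² < κ < μ + σ² + 1, the sequence defined by π_κ normalizing constant as in Lemma 2.2, πⱼ = (∏_{i=κ+1}^{j} σ²/(σ²+i−μ))·π_κ for j ≥ κ+1, π_{κ−1} = ((σ²+κ−μ)/(σ²+μ−κ+1))·π_κ, and πⱼ = (∏_{i=j}^{κ−2} σ²/(σ²+μ−i))·π_{κ−1} for j ≤ κ−2, defines a probability distribution on ℤ: all terms are nonnegative and the total mass is finite, so the normalization is well defined. -/

import Mathlib

open Filter

lemma psi_aux_top (μ σ2 : ℝ) (hσ : 0 < σ2) (κ : ℤ) (h1 : μ - σ2 < (κ : ℝ)) :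
    Summable (fun n : ℕ => ∏ i ∈ Finset.Icc (κ + 1) (κ + n), σ2 / (σ2 + (i : ℝ) - μ)) := by
  set f : ℕ → ℝ := fun n => ∏ i ∈ Finset.Icc (κ + 1) (κ + n), σ2 / (σ2 + (i : ℝ) - μ) with hf
  have hterm : ∀ i : ℤ, κ + 1 ≤ i → 0 < σ2 + (i : ℝ) - μ := by
    intro i hi
    have : (κ : ℝ) + 1 ≤ (i : ℝ) := by exact_mod_cast hi
    linarith
  have hnn : ∀ n, 0 ≤ f n := by
    intro n
    refine Finset.prod_nonneg fun i hi => div_nonneg hσ.le ?_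
    exact (hterm i (Finset.mem_Icc.1 hi).1).le
  have hstep : ∀ n : ℕ, f (n + 1) = f n * (σ2 / (σ2 + ((κ : ℝ) + n + 1) - μ)) := by
    intro n
    have hset : Finset.Icc (κ + 1) (κ + ((n : ℤ) + 1)) =
        insert (κ + (n : ℤ) + 1) (Finset.Icc (κ + 1) (κ + (n : ℤ))) := by
      ext x; simp only [Finset.mem_Icc, Finset.mem_insert]; omega
    have hnotmem : (κ + (n : ℤ) + 1) ∉ Finset.Icc (κ + 1) (κ + (n : ℤ)) := by
      simp only [Finset.mem_Icc]; omega
    simp only [hf]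
    push_cast
    rw [hset, Finset.prod_insert hnotmem, mul_comm]
    push_cast
    ring_nf
    simp only [show ∀ x : ℤ, σ2 + (x : ℝ) - μ = σ2 - μ + x from fun x => by ring]; ring
  refine summable_of_ratio_norm_eventually_le (r := 1/2) (by norm_num) ?_
  filter_upwards [eventually_ge_atTop ⌈μ - κ + σ2⌉₊] with n hn
  have hn' : μ - κ + σ2 ≤ (n : ℝ) := by
    calc μ - κ + σ2 ≤ (⌈μ - κ + σ2⌉₊ : ℝ) := Nat.le_ceil _
    _ ≤ n := by exact_mod_cast hn
  have hden : 2 * σ2 ≤ σ2 + ((κ : ℝ) + n + 1) - μ := by linarith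
  have hfac : σ2 / (σ2 + ((κ : ℝ) + n + 1) - μ) ≤ 1 / 2 := by
    rw [div_le_div_iff₀ (by linarith) (by norm_num)]
    linarith
  rw [Real.norm_of_nonneg (hnn _), Real.norm_of_nonneg (hnn _), hstep n]
  calc f n * (σ2 / (σ2 + ((κ : ℝ) + n + 1) - μ)) ≤ f n * (1 / 2) :=
        mul_le_mul_of_nonneg_left hfac (hnn n)
  _ = 1 / 2 * f n := by ring

lemma psi_aux_bot (μ σ2 : ℝ) (hσ : 0 < σ2) (κ : ℤ) (h2 : (κ : ℝ) < μ + σ2 + 1) :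
    Summable (fun n : ℕ => ∏ i ∈ Finset.Icc (κ - 1 - n) (κ - 2), σ2 / (σ2 + μ - (i : ℝ))) := by
  set g : ℕ → ℝ := fun n => ∏ i ∈ Finset.Icc (κ - 1 - n) (κ - 2), σ2 / (σ2 + μ - (i : ℝ)) with hg
  have hterm : ∀ i : ℤ, i ≤ κ - 2 → 0 < σ2 + μ - (i : ℝ) := by
    intro i hi
    have : (i : ℝ) ≤ (κ : ℝ) - 2 := by exact_mod_cast hi
    linarith
  have hnn : ∀ n, 0 ≤ g n := by
    intro n
    refine Finset.prod_nonneg fun i hi => div_nonneg hσ.le ?_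
    exact (hterm i (Finset.mem_Icc.1 hi).2).le
  have hstep : ∀ n : ℕ, g (n + 1) = g n * (σ2 / (σ2 + μ - ((κ : ℝ) - 2 - n))) := by
    intro n
    have hset : Finset.Icc (κ - 1 - ((n : ℤ) + 1)) (κ - 2) =
        insert (κ - 2 - (n : ℤ)) (Finset.Icc (κ - 1 - (n : ℤ)) (κ - 2)) := by
      ext x; simp only [Finset.mem_Icc, Finset.mem_insert]; omega
    have hnotmem : (κ - 2 - (n : ℤ)) ∉ Finset.Icc (κ - 1 - (n : ℤ)) (κ - 2) := by
      simp only [Finset.mem_Icc]; omega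
    simp only [hg]
    push_cast
    rw [hset, Finset.prod_insert hnotmem, mul_comm]
    push_cast
    ring_nf
  refine summable_of_ratio_norm_eventually_le (r := 1/2) (by norm_num) ?_
  filter_upwards [eventually_ge_atTop ⌈σ2 - μ + κ⌉₊] with n hn
  have hn' : σ2 - μ + κ ≤ (n : ℝ) := by
    calc σ2 - μ + κ ≤ (⌈σ2 - μ + κ⌉₊ : ℝ) := Nat.le_ceil _
    _ ≤ n := by exact_mod_cast hn
  have hden : 2 * σ2 ≤ σ2 + μ - ((κ : ℝ) - 2 - n) := by linarith
  have hfac : σ2 / (σ2 + μ - ((κ : ℝ) - 2 - n)) ≤ 1 / 2 := by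
    rw [div_le_div_iff₀ (by linarith) (by norm_num)]
    linarith
  rw [Real.norm_of_nonneg (hnn _), Real.norm_of_nonneg (hnn _), hstep n]
  calc g n * (σ2 / (σ2 + μ - ((κ : ℝ) - 2 - n))) ≤ g n * (1 / 2) :=
        mul_le_mul_of_nonneg_left hfac (hnn n)
  _ = 1 / 2 * g n := by ring

/-- The weights defining `Ψ_κ(μ, σ²)` are nonnegative, have finite total mass
(so the normalizing constant `π_κ` of Lemma 2.2 is well defined), and after
normalization they define a probability distribution on ℤ. -/
theorem psi_is_probability_distribution
    (μ σ2 : ℝ) (hσ : 0 < σ2) (κ : ℤ)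
    (h1 : μ - σ2 < (κ : ℝ)) (h2 : (κ : ℝ) < μ + σ2 + 1) :
    let w : ℤ → ℝ := fun j =>
      if κ ≤ j then ∏ i ∈ Finset.Icc (κ + 1) j, σ2 / (σ2 + (i : ℝ) - μ)
      else ((σ2 + (κ : ℝ) - μ) / (σ2 + μ - (κ : ℝ) + 1)) *
        ∏ i ∈ Finset.Icc j (κ - 2), σ2 / (σ2 + μ - (i : ℝ))
    (∀ j, 0 ≤ w j) ∧ Summable w ∧ HasSum (fun j => w j / (∑' j, w j)) 1 := by
  intro w
  have hterm1 : ∀ i : ℤ, κ + 1 ≤ i → 0 < σ2 + (i : ℝ) - μ := by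
    intro i hi
    have : (κ : ℝ) + 1 ≤ (i : ℝ) := by exact_mod_cast hi
    linarith
  have hterm2 : ∀ i : ℤ, i ≤ κ - 2 → 0 < σ2 + μ - (i : ℝ) := by
    intro i hi
    have : (i : ℝ) ≤ (κ : ℝ) - 2 := by exact_mod_cast hi
    linarith
  have hr : 0 ≤ (σ2 + (κ : ℝ) - μ) / (σ2 + μ - (κ : ℝ) + 1) :=
    div_nonneg (by linarith) (by linarith)
  have hnn : ∀ j, 0 ≤ w j := by
    intro j
    simp only [w]
    split
    · exact Finset.prod_nonneg fun i hi =>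
        div_nonneg hσ.le (hterm1 i (Finset.mem_Icc.1 hi).1).le
    · exact mul_nonneg hr (Finset.prod_nonneg fun i hi =>
        div_nonneg hσ.le (hterm2 i (Finset.mem_Icc.1 hi).2).le)
  have hsum : Summable w := by
    rw [← (Equiv.addRight κ).summable_iff]
    rw [summable_int_iff_summable_nat_and_neg]
    constructor
    · have := psi_aux_top μ σ2 hσ κ h1
      refine this.congr fun n => ?_
      simp only [w, Equiv.coe_addRight, Function.comp]
      rw [if_pos (by omega), add_comm (n : ℤ) κ]
    · rw [← summable_nat_add_iff 1]
      have := (psi_aux_bot μ σ2 hσ κ h2).mul_left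
        ((σ2 + (κ : ℝ) - μ) / (σ2 + μ - (κ : ℝ) + 1))
      refine this.congr fun n => ?_
      simp only [w, Equiv.coe_addRight, Function.comp]
      rw [if_neg (by push_cast; omega)]
      have harg : (-((n : ℤ) + 1) + κ) = κ - 1 - (n : ℤ) := by ring
      push_cast [harg]
      rfl
  have hκ : w κ = 1 := by
    have he : Finset.Icc (κ + 1) κ = ∅ := Finset.Icc_eq_empty (by omega)
    simp [w, he]
  have hS : (0 : ℝ) < ∑' j, w j := by
    have := Summable.le_tsum hsum κ (fun j _ => hnn j)
    rw [hκ] at this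
    linarith
  refine ⟨hnn, hsum, ?_⟩
  have := hsum.hasSum.div_const (∑' j, w j)
  rwa [div_self hS.ne'] at this
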